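/- For every real number μ with μ < 0: (i) maxS(μ,β) ≥ √(1−μ) − 1 for all β ∈ ℝ; (ii) maxS(μ, βopt(μ)) = √(1−μ) − 1, where βopt(μ) = (1−√(1−μ))/(1+√(1−μ)) < 0; (iii) if maxS(μ,β) = √(1−μ) − 1 for some β ∈ ℝ, then β = βopt(μ). In particular min_{β∈ℝ} maxS(μ,β) = √(1−μ) − 1 with unique minimizer βopt(μ). -/

import Mathlib

/-- The maximum of the moduli of the two complex roots (counted with multiplicity) of
`λ² − (1+β)·μ·λ + β·μ = 0`; the roots are given by the quadratic formula
`((1+β)μ ± √((1+β)²μ² − 4βμ))/2` (complex square root via `cpow`). -/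
noncomputable def maxS (μ β : ℝ) : ℝ :=
  max (norm (((((1 + β) * μ : ℝ) : ℂ) +
        ((((1 + β) ^ 2 * μ ^ 2 - 4 * β * μ : ℝ) : ℂ)) ^ ((1 : ℂ) / 2)) / 2))
      (norm (((((1 + β) * μ : ℝ) : ℂ) -
        ((((1 + β) ^ 2 * μ ^ 2 - 4 * β * μ : ℝ) : ℂ)) ^ ((1 : ℂ) / 2)) / 2))

/-- The optimal coefficient `βopt(μ) = (1 − √(1−μ))/(1 + √(1−μ))`. -/
noncomputable def βopt (μ : ℝ) : ℝ := (1 - Real.sqrt (1 - μ)) / (1 + Real.sqrt (1 - μ))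

lemma cpow_half_of_nonneg (x : ℝ) (hx : 0 ≤ x) :
    ((x:ℂ)) ^ ((1:ℂ)/2) = (Real.sqrt x : ℂ) := by
  rw [Real.sqrt_eq_rpow, Complex.ofReal_cpow hx]
  norm_num

lemma cpow_half_of_neg (x : ℝ) (hx : x < 0) :
    ((x:ℂ)) ^ ((1:ℂ)/2) = Complex.I * (Real.sqrt (-x) : ℂ) := by
  rw [Complex.cpow_def_of_ne_zero (by exact_mod_cast hx.ne)]
  rw [Complex.log, Complex.arg_ofReal_of_neg hx, Complex.norm_real, Real.norm_eq_abs, abs_of_neg hx]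
  have : ((Real.log (-x) :ℂ) + (Real.pi : ℝ) * Complex.I) * (1/2)
      = ((Real.log (-x) / 2 : ℝ) : ℂ) + ((Real.pi/2 : ℝ)) * Complex.I := by push_cast; ring
  rw [this, Complex.exp_add, Complex.exp_mul_I]
  have h1 : Complex.exp ((Real.log (-x) / 2 : ℝ) : ℂ) = ((Real.exp (Real.log (-x) / 2) : ℝ) : ℂ) := by
    rw [Complex.ofReal_exp]
  rw [h1]
  have h2 : Real.exp (Real.log (-x) / 2) = Real.sqrt (-x) := by
    rw [Real.sqrt_eq_rpow, Real.rpow_def_of_pos (by linarith)]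
    ring_nf
  rw [h2]
  have hc : Complex.cos ((Real.pi/2 : ℝ) : ℂ) = 0 := by
    rw [← Complex.ofReal_cos]; norm_num
  have hsn : Complex.sin ((Real.pi/2 : ℝ) : ℂ) = 1 := by
    rw [← Complex.ofReal_sin]; norm_num
  rw [hc, hsn]
  ring

lemma max_abs_add_sub (a b : ℝ) (hb : 0 ≤ b) : max (|(a+b)/2|) (|(a-b)/2|) = (|a| + b)/2 := by
  rcases le_or_gt 0 a with ha | ha
  · rw [abs_of_nonneg ha, abs_of_nonneg (by linarith)]
    rw [max_eq_left]
    rcases abs_cases ((a-b)/2) with ⟨h1,_⟩|⟨h1,_⟩ <;> linarith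
  · rw [abs_of_neg ha, abs_of_nonpos (show (a-b)/2 ≤ 0 by linarith)]
    rw [max_eq_right]
    · ring
    · rcases abs_cases ((a+b)/2) with ⟨h1,_⟩|⟨h1,_⟩ <;> linarith

lemma maxS_of_nonneg (μ β : ℝ) (hD : 0 ≤ (1 + β) ^ 2 * μ ^ 2 - 4 * β * μ) :
    maxS μ β = (|(1+β)*μ| + Real.sqrt ((1 + β) ^ 2 * μ ^ 2 - 4 * β * μ))/2 := by
  unfold maxS
  rw [cpow_half_of_nonneg _ hD]
  set a := (1+β)*μ with ha
  set r := Real.sqrt ((1 + β) ^ 2 * μ ^ 2 - 4 * β * μ) with hr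
  have e1 : ((a:ℂ) + (r:ℂ))/2 = (((a+r)/2 : ℝ):ℂ) := by push_cast; ring
  have e2 : ((a:ℂ) - (r:ℂ))/2 = (((a-r)/2 : ℝ):ℂ) := by push_cast; ring
  rw [e1, e2, Complex.norm_real, Complex.norm_real, Real.norm_eq_abs, Real.norm_eq_abs]
  exact max_abs_add_sub a r (Real.sqrt_nonneg _)

lemma maxS_of_neg (μ β : ℝ) (hD : (1 + β) ^ 2 * μ ^ 2 - 4 * β * μ < 0) :
    maxS μ β = Real.sqrt (β*μ) := by
  unfold maxS
  rw [cpow_half_of_neg _ hD]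
  set a := (1+β)*μ with ha
  set t := Real.sqrt (-((1 + β) ^ 2 * μ ^ 2 - 4 * β * μ)) with ht
  have e1 : ((a:ℂ) + Complex.I * (t:ℂ))/2 = ((a/2 : ℝ):ℂ) + ((t/2 : ℝ):ℂ) * Complex.I := by
    push_cast; ring
  have e2 : ((a:ℂ) - Complex.I * (t:ℂ))/2 = ((a/2 : ℝ):ℂ) + ((-(t/2) : ℝ):ℂ) * Complex.I := by
    push_cast; ring
  rw [e1, e2, Complex.norm_add_mul_I, Complex.norm_add_mul_I]
  have e3 : (-(t/2))^2 = (t/2)^2 := by ring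
  rw [e3, max_self]
  have ht2 : t^2 = -((1 + β) ^ 2 * μ ^ 2 - 4 * β * μ) := Real.sq_sqrt (by linarith)
  have e4 : (a/2)^2 + (t/2)^2 = β*μ := by
    have : a^2 = (1 + β) ^ 2 * μ ^ 2 := by rw [ha]; ring
    nlinarith [ht2, this]
  rw [e4]

theorem stmt3 (μ : ℝ) (h : μ < 0) :
    (∀ β : ℝ, Real.sqrt (1 - μ) - 1 ≤ maxS μ β) ∧
    maxS μ (βopt μ) = Real.sqrt (1 - μ) - 1 ∧
    βopt μ < 0 ∧
    (∀ β : ℝ, maxS μ β = Real.sqrt (1 - μ) - 1 → β = βopt μ) := by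
  set s := Real.sqrt (1 - μ) with hs
  have hs1 : 1 < s := by
    rw [hs]
    exact (Real.lt_sqrt (by norm_num)).mpr (by nlinarith)
  have hs2 : s^2 = 1 - μ := Real.sq_sqrt (by linarith)
  have h1s : (0:ℝ) < 1 + s := by linarith
  -- βopt relation
  have hbo : (1 + βopt μ) * μ = 2*(1-s) := by
    unfold βopt
    rw [← hs]
    field_simp
    nlinarith [hs2]
  -- equality case
  have keyeq : ∀ β : ℝ, (1+β)*μ = 2*(1-s) → maxS μ β = s - 1 := by
    intro β hb
    have hβμ : β*μ = (1-s)^2 := by nlinarith [hs2]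
    have hD : (1 + β) ^ 2 * μ ^ 2 - 4 * β * μ = 0 := by nlinarith [hb, hβμ]
    rw [maxS_of_nonneg μ β hD.ge, hD, Real.sqrt_zero, hb]
    rw [abs_of_neg (by nlinarith)]
    ring
  -- strict case
  have keylt : ∀ β : ℝ, (1+β)*μ ≠ 2*(1-s) → s - 1 < maxS μ β := by
    intro β hb
    set a := (1+β)*μ with ha
    have haa : a^2 = (1 + β) ^ 2 * μ ^ 2 := by rw [ha]; ring
    have hc : β*μ = a - μ := by rw [ha]; ring
    rcases le_or_gt 0 ((1 + β) ^ 2 * μ ^ 2 - 4 * β * μ) with hD | hD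
    · rw [maxS_of_nonneg μ β hD]
      have ha2 : 4*s^2 ≤ (a-2)^2 := by nlinarith [hs2, hc, haa]
      rcases le_or_gt a (2-2*s) with h1 | h1
      · have h1' : a < 2-2*s := lt_of_le_of_ne h1 (by intro he; exact hb (by linarith))
        have hDgt : ((2*s-2+a))^2 < (1 + β) ^ 2 * μ ^ 2 - 4 * β * μ := by
          nlinarith [hs2, hc, haa]
        have hlt : 2*s-2+a < Real.sqrt ((1 + β) ^ 2 * μ ^ 2 - 4 * β * μ) := by
          have := Real.sqrt_lt_sqrt (sq_nonneg (2*s-2+a)) hDgt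
          rw [Real.sqrt_sq_eq_abs] at this
          calc 2*s-2+a ≤ |2*s-2+a| := le_abs_self _
            _ < _ := this
        have := neg_abs_le a
        linarith
      · have h2 : 2+2*s ≤ a := by nlinarith
        have := le_abs_self a
        have := Real.sqrt_nonneg ((1 + β) ^ 2 * μ ^ 2 - 4 * β * μ)
        linarith
    · rw [maxS_of_neg μ β hD]
      have h1 : 2-2*s < a := by nlinarith [hs2, haa]
      have h2 : (s-1)^2 < β*μ := by nlinarith [hs2, hc]
      exact (Real.lt_sqrt (by linarith)).mpr h2
  refine ⟨?_, keyeq _ hbo, ?_, ?_⟩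
  · intro β
    by_cases hb : (1+β)*μ = 2*(1-s)
    · rw [keyeq β hb]
    · exact (keylt β hb).le
  · exact div_neg_of_neg_of_pos (by linarith) h1s
  · intro β hm
    by_cases hb : (1+β)*μ = 2*(1-s)
    · have : (1+β)*μ = (1 + βopt μ)*μ := by rw [hb, hbo]
      have := mul_right_cancel₀ (ne_of_lt h) this
      linarith
    · exact absurd hm (ne_of_gt (keylt β hb))
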